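/- arXiv:2203.02675 — 2 statements merged into one kernel-verified Lean document; each statement's English description precedes it below -/
import Mathlib

section
/- For every real a > 0, the integral from 0 to infinity of (e^(−at)/t − 2·e^(−(a + 1/2)t)/(t·(1 + e^(−t)))) dt equals 2·ln(√2·Γ(a/2 + 3/4)/(√a·Γ(a/2 + 1/4))). -/
open Real MeasureTheory Set Filter


lemma neg_mul_tendsto_atBot {c : ℝ} (hc : 0 < c) :
    Tendsto (fun t : ℝ => -(c*t)) atTop atBot := by
  have h1 : Tendsto (fun t : ℝ => c*t) atTop atTop := tendsto_id.const_mul_atTop hc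
  simpa using tendsto_neg_atBot_iff.mpr h1

lemma exp_neg_mul_tendsto {c : ℝ} (hc : 0 < c) :
    Tendsto (fun t : ℝ => exp (-(c*t))) atTop (nhds 0) :=
  Real.tendsto_exp_atBot.comp (neg_mul_tendsto_atBot hc)

lemma int_exp {c : ℝ} (hc : 0 < c) : IntegrableOn (fun t : ℝ => exp (-(c*t))) (Ioi 0) := by
  simpa [neg_mul] using exp_neg_integrableOn_Ioi 0 hc

lemma val_exp {c : ℝ} (hc : 0 < c) : ∫ t in Ioi (0:ℝ), exp (-(c*t)) = 1/c := by
  have h : ∀ x ∈ Ici (0:ℝ), HasDerivAt (fun t => -(1/c) * exp (-(c*t))) (exp (-(c*x))) x := by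
    intro x _
    have : HasDerivAt (fun t : ℝ => -(c*t)) (-c) x := by
      simpa [Pi.neg_def] using ((hasDerivAt_id x).const_mul c).neg
    have := (this.exp).const_mul (-(1/c))
    refine this.congr_deriv ?_
    field_simp
  have hl : Tendsto (fun t : ℝ => -(1/c) * exp (-(c*t))) atTop (nhds 0) := by
    simpa using (exp_neg_mul_tendsto hc).const_mul (-(1/c))
  have := integral_Ioi_of_hasDerivAt_of_tendsto' h (int_exp hc) hl
  simp at this
  rw [this]; ring

lemma xexp_le_one {x : ℝ} (hx : 0 ≤ x) : x * exp (-x) ≤ 1 := by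
  rw [exp_neg]
  rw [mul_inv_le_iff₀ (exp_pos x)]
  nlinarith [add_one_le_exp x]

lemma int_texp {c : ℝ} (hc : 0 < c) :
    IntegrableOn (fun t : ℝ => t * exp (-(c*t))) (Ioi 0) := by
  have hb : IntegrableOn (fun t : ℝ => (2/c) * exp (-(c/2*t))) (Ioi 0) :=
    (int_exp (by positivity)).const_mul _
  refine hb.mono' ?_ ?_
  · exact (continuous_id.mul (continuous_exp.comp (by continuity))).aestronglyMeasurable
  · filter_upwards [ae_restrict_mem measurableSet_Ioi] with t ht
    have ht0 : (0:ℝ) < t := ht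
    rw [norm_eq_abs, abs_of_nonneg (by positivity)]
    have h1 : c/2*t * exp (-(c/2*t)) ≤ 1 := xexp_le_one (by positivity)
    have key : t * exp (-(c*t)) = (2/c) * (c/2*t * exp (-(c/2*t)) * exp (-(c/2*t))) := by
      rw [mul_assoc (c/2*t), ← Real.exp_add]
      have h4 : -(c/2*t) + -(c/2*t) = -(c*t) := by ring
      rw [h4]
      field_simp
    rw [key]
    have h2 : (0:ℝ) < exp (-(c/2*t)) := exp_pos _
    have := mul_le_mul_of_nonneg_right h1 h2.le
    have h3 : (0:ℝ) ≤ 2/c := by positivity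
    calc (2/c) * (c/2*t * exp (-(c/2*t)) * exp (-(c/2*t))) ≤ (2/c) * (1 * exp (-(c/2*t))) :=
          mul_le_mul_of_nonneg_left this h3
      _ = (2/c) * exp (-(c/2*t)) := by ring

lemma val_texp {c : ℝ} (hc : 0 < c) :
    ∫ t in Ioi (0:ℝ), t * exp (-(c*t)) = 1/c^2 := by
  have h : ∀ x ∈ Ici (0:ℝ), HasDerivAt (fun t => -(t/c + 1/c^2) * exp (-(c*t)))
      (x * exp (-(c*x))) x := by
    intro x _
    have h1 : HasDerivAt (fun t : ℝ => -(c*t)) (-c) x := by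
      simpa [Pi.neg_def] using ((hasDerivAt_id x).const_mul c).neg
    have h2 : HasDerivAt (fun t : ℝ => -(t/c + 1/c^2)) (-(1/c)) x :=
      (((hasDerivAt_id x).div_const c).add_const (1/c^2)).neg
    have := h2.mul h1.exp
    refine this.congr_deriv ?_
    field_simp
    ring
  have hl : Tendsto (fun t : ℝ => -(t/c + 1/c^2) * exp (-(c*t))) atTop (nhds 0) := by
    have e1 : Tendsto (fun t : ℝ => t * exp (-(c*t))) atTop (nhds 0) := by
      have := Real.tendsto_pow_mul_exp_neg_atTop_nhds_zero 1
      have comp := this.comp (tendsto_id.const_mul_atTop hc)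
      simp only [Function.comp, pow_one, id] at comp
      have := comp.const_mul (1/c)
      simp only [mul_zero] at this
      refine this.congr fun t => ?_
      simp only [Function.comp]
      field_simp
    have e2 := (exp_neg_mul_tendsto hc).const_mul (1/c^2)
    have e3 := ((e1.const_mul (1/c)).add e2).neg
    simp only [mul_zero, add_zero, neg_zero, zero_mul] at e3
    refine e3.congr fun t => ?_
    ring
  have := integral_Ioi_of_hasDerivAt_of_tendsto' h (int_texp hc) hl
  simp at this
  rw [this]; field_simp

lemma one_sub_exp_neg_le {x : ℝ} : 1 - exp (-x) ≤ x := by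
  nlinarith [add_one_le_exp (-x)]

lemma frullani_integrand_nonneg {p q t : ℝ} (hpq : p ≤ q) (ht : 0 < t) :
    0 ≤ (exp (-(p*t)) - exp (-(q*t)))/t :=
  div_nonneg (sub_nonneg.mpr (exp_le_exp.mpr (by nlinarith))) ht.le

lemma frullani_integrand_le {p q t : ℝ} (hpq : p ≤ q) (ht : 0 < t) :
    (exp (-(p*t)) - exp (-(q*t)))/t ≤ (q - p) * exp (-(p*t)) := by
  rw [div_le_iff₀ ht]
  have h1 : exp (-(q*t)) = exp (-(p*t)) * exp (-((q-p)*t)) := by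
    rw [← Real.exp_add]; ring_nf
  rw [h1]
  have h2 : 1 - exp (-((q-p)*t)) ≤ (q-p)*t := one_sub_exp_neg_le
  nlinarith [exp_pos (-(p*t))]

lemma frullani_meas (p x : ℝ) :
    AEStronglyMeasurable (fun t : ℝ => (exp (-(p*t)) - exp (-(x*t)))/t)
      (volume.restrict (Ioi 0)) := by
  apply Measurable.aestronglyMeasurable
  exact ((measurable_exp.comp (measurable_id.const_mul p).neg).sub
    (measurable_exp.comp (measurable_id.const_mul x).neg)).div measurable_id

lemma frullani_integrable {p q : ℝ} (hp : 0 < p) (hpq : p ≤ q) :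
    IntegrableOn (fun t : ℝ => (exp (-(p*t)) - exp (-(q*t)))/t) (Ioi 0) := by
  have hb : IntegrableOn (fun t : ℝ => (q-p) * exp (-(p*t))) (Ioi 0) :=
    (int_exp hp).const_mul _
  refine hb.mono' (frullani_meas p q) ?_
  filter_upwards [ae_restrict_mem measurableSet_Ioi] with t ht
  rw [norm_eq_abs, abs_of_nonneg (frullani_integrand_nonneg hpq ht)]
  exact frullani_integrand_le hpq ht

lemma frullani_hasDeriv {p : ℝ} (hp : 0 < p) {x₀ : ℝ} (hx₀ : p ≤ x₀) :
    HasDerivAt (fun x => ∫ t in Ioi (0:ℝ), (exp (-(p*t)) - exp (-(x*t)))/t) (1/x₀) x₀ := by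
  have hx0 : 0 < x₀ := lt_of_lt_of_le hp hx₀
  have key := hasDerivAt_integral_of_dominated_loc_of_deriv_le
    (F := fun x t => (exp (-(p*t)) - exp (-(x*t)))/t)
    (F' := fun x t => exp (-(x*t)))
    (bound := fun t => exp (-(x₀/2*t)))
    (μ := volume.restrict (Ioi 0)) (x₀ := x₀) (Metric.ball_mem_nhds x₀ (half_pos hx0))
    (Eventually.of_forall fun x => frullani_meas p x)
    (frullani_integrable hp hx₀)
    ((measurable_exp.comp (measurable_id.const_mul x₀).neg).aestronglyMeasurable)
    ?_ (int_exp (by positivity)) ?_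
  · rw [val_exp hx0] at key
    exact key.2
  · filter_upwards [ae_restrict_mem measurableSet_Ioi] with t ht x hx
    have ht0 : (0:ℝ) < t := ht
    rw [norm_eq_abs, abs_of_nonneg (exp_pos _).le, exp_le_exp]
    have : x₀/2 < x := by
      have := abs_lt.mp (mem_ball_iff_norm.mp hx)
      linarith [this.1]
    nlinarith
  · filter_upwards [ae_restrict_mem measurableSet_Ioi] with t ht x _
    have ht0 : (0:ℝ) < t := ht
    have h1 : HasDerivAt (fun x : ℝ => -(x*t)) (-t) x := by
      simpa [Pi.neg_def] using ((hasDerivAt_id x).mul_const t).neg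
    have h2 := (h1.exp.div_const t).const_sub (exp (-(p*t))/t)
    have h3 : -(exp (-(x*t)) * -t / t) = exp (-(x*t)) := by field_simp
    rw [h3] at h2
    refine HasDerivAt.congr_deriv (h2.congr_of_eventuallyEq (Eventually.of_forall fun y => ?_)) rfl
    simp [sub_div]

lemma frullani_value {p q : ℝ} (hp : 0 < p) (hpq : p ≤ q) :
    ∫ t in Ioi (0:ℝ), (exp (-(p*t)) - exp (-(q*t)))/t = log (q/p) := by
  have hq : 0 < q := lt_of_lt_of_le hp hpq
  have hderiv : ∀ x ∈ uIcc p q,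
      HasDerivAt (fun x => ∫ t in Ioi (0:ℝ), (exp (-(p*t)) - exp (-(x*t)))/t) (x⁻¹) x := by
    intro x hx
    rw [uIcc_of_le hpq] at hx
    simpa [one_div] using frullani_hasDeriv hp hx.1
  have h0 : ∀ x ∈ uIcc p q, x ≠ 0 := by
    intro x hx
    rw [uIcc_of_le hpq] at hx
    exact (lt_of_lt_of_le hp hx.1).ne'
  have hint : IntervalIntegrable (fun x : ℝ => x⁻¹) volume p q := intervalIntegral.intervalIntegrable_inv h0 continuousOn_id
  have := intervalIntegral.integral_eq_sub_of_hasDerivAt hderiv hint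
  rw [integral_inv_of_pos hp hq] at this
  simpa using this.symm

noncomputable def ff (a t : ℝ) : ℝ :=
  exp (-(a * t)) / t - 2 * exp (-((a + 1/2) * t)) / (t * (1 + exp (-t)))

lemma exp_halves (t : ℝ) (k : ℕ) : exp (-((k/2 : ℝ) * t)) = exp (-(t/2))^k := by
  rw [← Real.exp_nat_mul]
  congr 1
  ring

lemma exp_split (a c t : ℝ) : exp (-((a+c)*t)) = exp (-(a*t)) * exp (-(c*t)) := by
  rw [← Real.exp_add]; ring_nf

lemma ff_eq {a t : ℝ} (ht : 0 < t) :
    ff a t = exp (-(a*t)) * (1 - exp (-(t/2)))^2 / (t * (1 + exp (-t))) := by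
  have h1 : exp (-((a+1/2)*t)) = exp (-(a*t)) * exp (-(t/2)) := by
    rw [exp_split]
    congr 1
    simpa using exp_halves t 1
  have h2 : exp (-t) = exp (-(t/2))^2 := by
    have := exp_halves t 2
    norm_num at this
    rw [← this]
  have hden : 0 < 1 + exp (-t) := by positivity
  rw [ff, h1, h2]
  have hE : 0 < exp (-(t/2)) := exp_pos _
  field_simp
  ring

lemma ff_nonneg {a t : ℝ} (ht : 0 < t) : 0 ≤ ff a t := by
  rw [ff_eq ht]
  have h2 : (0:ℝ) < 1 + exp (-t) := by positivity
  positivity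

lemma ff_le {a t : ℝ} (ht : 0 < t) : ff a t ≤ t * exp (-(a*t)) / 4 := by
  rw [ff_eq ht]
  have hden : (1:ℝ) ≤ 1 + exp (-t) := by nlinarith [exp_pos (-t)]
  have h1 : 0 ≤ 1 - exp (-(t/2)) := by
    simp only [sub_nonneg]
    exact exp_le_one_iff.mpr (by linarith)
  have h2 : 1 - exp (-(t/2)) ≤ t/2 := one_sub_exp_neg_le
  have h3 : (1 - exp (-(t/2)))^2 ≤ (t/2)^2 := by nlinarith
  have hA := (exp_pos (-(a*t))).le
  calc exp (-(a*t)) * (1 - exp (-(t/2)))^2 / (t * (1 + exp (-t)))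
      ≤ exp (-(a*t)) * (t/2)^2 / (t * 1) := by
        apply div_le_div₀ (by positivity) (by nlinarith) (by nlinarith) (by nlinarith)
    _ = t * exp (-(a*t)) / 4 := by field_simp; ring

lemma ff_meas (a : ℝ) : AEStronglyMeasurable (ff a) (volume.restrict (Ioi 0)) := by
  apply Measurable.aestronglyMeasurable
  unfold ff
  fun_prop

lemma ff_integrable {a : ℝ} (ha : 0 < a) : IntegrableOn (ff a) (Ioi 0) := by
  have hb : IntegrableOn (fun t : ℝ => t * exp (-(a*t)) / 4) (Ioi 0) := (int_texp ha).div_const 4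
  refine hb.mono' (ff_meas a) ?_
  filter_upwards [ae_restrict_mem measurableSet_Ioi] with t ht
  rw [norm_eq_abs, abs_of_nonneg (ff_nonneg ht)]
  exact ff_le ht

lemma I_nonneg {a : ℝ} (ha : 0 < a) : 0 ≤ ∫ t in Ioi (0:ℝ), ff a t :=
  setIntegral_nonneg measurableSet_Ioi fun t ht => ff_nonneg ht

lemma I_le {a : ℝ} (ha : 0 < a) : ∫ t in Ioi (0:ℝ), ff a t ≤ 1/(4*a^2) := by
  have h := setIntegral_mono_on (ff_integrable ha) ((int_texp ha).div_const 4)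
    measurableSet_Ioi (fun t ht => ff_le ht)
  calc ∫ t in Ioi (0:ℝ), ff a t ≤ ∫ t in Ioi (0:ℝ), t * exp (-(a*t)) / 4 := h
    _ = (∫ t in Ioi (0:ℝ), t * exp (-(a*t))) / 4 := by rw [integral_div]
    _ = 1/(4*a^2) := by rw [val_texp ha]; ring

lemma ff_diff_eq {a t : ℝ} (ht : 0 < t) :
    ff a t - ff (a+2) t =
      (exp (-(a*t)) - exp (-((a+1/2)*t)))/t
      - (exp (-((a+1/2)*t)) - exp (-((a+3/2)*t)))/t
      + (exp (-((a+3/2)*t)) - exp (-((a+2)*t)))/t := by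
  have e (c : ℝ) (k : ℕ) (hc : c = k/2) :
      exp (-((a+c)*t)) = exp (-(a*t)) * exp (-(t/2))^k := by
    rw [exp_split, hc, exp_halves]
  have e1 := e (1/2) 1 (by norm_num)
  have e3 := e (3/2) 3 (by norm_num)
  have e4 := e 2 4 (by norm_num)
  have e5 := e (5/2) 5 (by norm_num)
  have h2 : exp (-t) = exp (-(t/2))^2 := by
    have := exp_halves t 2; norm_num at this; rw [← this]
  have h52 : (a+2) + 1/2 = a + 5/2 := by ring
  simp only [ff, h52, e1, e3, e4, e5, h2]
  have hden : (0:ℝ) < 1 + exp (-(t/2))^2 := by positivity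
  field_simp
  ring

lemma I_rec {a : ℝ} (ha : 0 < a) :
    (∫ t in Ioi (0:ℝ), ff a t) - (∫ t in Ioi (0:ℝ), ff (a+2) t)
      = log ((a+1/2)/a) - log ((a+3/2)/(a+1/2)) + log ((a+2)/(a+3/2)) := by
  have ha2 : (0:ℝ) < a + 2 := by linarith
  have i1 := frullani_integrable ha (by linarith : a ≤ a + 1/2)
  have i2 := frullani_integrable (by linarith : (0:ℝ) < a + 1/2) (by linarith : a+1/2 ≤ a+3/2)
  have i3 := frullani_integrable (by linarith : (0:ℝ) < a + 3/2) (by linarith : a+3/2 ≤ a+2)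
  have hsub : (∫ t in Ioi (0:ℝ), ff a t) - (∫ t in Ioi (0:ℝ), ff (a+2) t)
      = ∫ t in Ioi (0:ℝ), (ff a t - ff (a+2) t) :=
    (integral_sub (ff_integrable ha) (ff_integrable ha2)).symm
  rw [hsub]
  have hcongr : ∫ t in Ioi (0:ℝ), (ff a t - ff (a+2) t)
      = ∫ t in Ioi (0:ℝ), ((exp (-(a*t)) - exp (-((a+1/2)*t)))/t
        - (exp (-((a+1/2)*t)) - exp (-((a+3/2)*t)))/t
        + (exp (-((a+3/2)*t)) - exp (-((a+2)*t)))/t) := by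
    apply setIntegral_congr_fun measurableSet_Ioi
    intro t ht
    exact ff_diff_eq ht
  rw [hcongr]
  have hi12 : IntegrableOn (fun t : ℝ => (exp (-(a*t)) - exp (-((a+1/2)*t)))/t
      - (exp (-((a+1/2)*t)) - exp (-((a+3/2)*t)))/t) (Ioi 0) := i1.sub i2
  rw [integral_add hi12 i3, integral_sub i1 i2,
    frullani_value ha (by linarith), frullani_value (by linarith) (by linarith),
    frullani_value (by linarith) (by linarith)]

lemma gamma_upper {x : ℝ} (hx : 0 < x) : Gamma (x + 1/2) ≤ Gamma x * Real.sqrt x := by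
  have h := convexOn_log_Gamma.2 (mem_Ioi.mpr hx) (mem_Ioi.mpr (by linarith : (0:ℝ) < x + 1))
    (by norm_num : (0:ℝ) ≤ 1/2) (by norm_num : (0:ℝ) ≤ 1/2) (by norm_num)
  simp only [smul_eq_mul, Function.comp] at h
  have hmid : (1/2 : ℝ) * x + (1/2) * (x+1) = x + 1/2 := by ring
  rw [hmid] at h
  have hΓ : Gamma (x+1) = x * Gamma x := Real.Gamma_add_one hx.ne'
  have hΓx : 0 < Gamma x := Real.Gamma_pos_of_pos hx
  rw [hΓ, Real.log_mul hx.ne' hΓx.ne'] at h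
  have hrhs : (1/2:ℝ) * log (Gamma x) + 1/2 * (log x + log (Gamma x))
      = log (Gamma x * Real.sqrt x) := by
    rw [Real.log_mul hΓx.ne' (Real.sqrt_pos.mpr hx).ne', Real.log_sqrt hx.le]
    ring
  rw [hrhs] at h
  have := Real.exp_le_exp.mpr h
  rwa [Real.exp_log (Real.Gamma_pos_of_pos (by linarith)), Real.exp_log (by positivity)] at this

lemma gamma_lower {x : ℝ} (hx : 0 < x) :
    x * Gamma x ≤ Gamma (x + 1/2) * Real.sqrt (x + 1/2) := by
  have hx2 : (0:ℝ) < x + 1/2 := by linarith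
  have h := convexOn_log_Gamma.2 (mem_Ioi.mpr hx2) (mem_Ioi.mpr (by linarith : (0:ℝ) < x + 3/2))
    (by norm_num : (0:ℝ) ≤ 1/2) (by norm_num : (0:ℝ) ≤ 1/2) (by norm_num)
  simp only [smul_eq_mul, Function.comp] at h
  have hmid : (1/2 : ℝ) * (x+1/2) + (1/2) * (x+3/2) = x + 1 := by ring
  rw [hmid] at h
  have hΓ32 : Gamma (x+3/2) = (x+1/2) * Gamma (x+1/2) := by
    rw [show x + 3/2 = (x + 1/2) + 1 by ring, Real.Gamma_add_one hx2.ne']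
  have hΓm : 0 < Gamma (x+1/2) := Real.Gamma_pos_of_pos hx2
  rw [hΓ32, Real.log_mul hx2.ne' hΓm.ne'] at h
  have hΓ1 : Gamma (x+1) = x * Gamma x := Real.Gamma_add_one hx.ne'
  have hΓx : 0 < Gamma x := Real.Gamma_pos_of_pos hx
  rw [hΓ1] at h
  have hrhs : (1/2:ℝ) * log (Gamma (x+1/2)) + 1/2 * (log (x+1/2) + log (Gamma (x+1/2)))
      = log (Gamma (x+1/2) * Real.sqrt (x+1/2)) := by
    rw [Real.log_mul hΓm.ne' (Real.sqrt_pos.mpr hx2).ne', Real.log_sqrt hx2.le]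
    ring
  rw [hrhs] at h
  have := Real.exp_le_exp.mpr h
  rwa [Real.exp_log (by positivity), Real.exp_log (by positivity)] at this

noncomputable def RR (a : ℝ) : ℝ :=
  2 * log (Real.sqrt 2 * Gamma (a/2 + 3/4) / (Real.sqrt a * Gamma (a/2 + 1/4)))

lemma g_pos {a : ℝ} (ha : 0 < a) :
    0 < Real.sqrt 2 * Gamma (a/2 + 3/4) / (Real.sqrt a * Gamma (a/2 + 1/4)) := by
  have h1 : 0 < Gamma (a/2 + 3/4) := Real.Gamma_pos_of_pos (by linarith)
  have h2 : 0 < Gamma (a/2 + 1/4) := Real.Gamma_pos_of_pos (by linarith)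
  have h3 : 0 < Real.sqrt a := Real.sqrt_pos.mpr ha
  have h4 : 0 < Real.sqrt 2 := by positivity
  positivity

lemma R_rec {a : ℝ} (ha : 0 < a) :
    RR a - RR (a+2) = log ((a+1/2)/a) - log ((a+3/2)/(a+1/2)) + log ((a+2)/(a+3/2)) := by
  have ha2 : (0:ℝ) < a + 2 := by linarith
  have hG3 : Gamma ((a+2)/2 + 3/4) = (a/2+3/4) * Gamma (a/2 + 3/4) := by
    rw [show (a+2)/2 + 3/4 = (a/2 + 3/4) + 1 by ring, Real.Gamma_add_one (by positivity)]
  have hG1 : Gamma ((a+2)/2 + 1/4) = (a/2+1/4) * Gamma (a/2 + 1/4) := by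
    rw [show (a+2)/2 + 1/4 = (a/2 + 1/4) + 1 by ring, Real.Gamma_add_one (by positivity)]
  have hg1 := g_pos ha
  have hg2 := g_pos ha2
  rw [RR, RR, ← mul_sub, ← Real.log_div hg1.ne' hg2.ne']
  have h1 : 0 < Gamma (a/2 + 3/4) := Real.Gamma_pos_of_pos (by linarith)
  have h2 : 0 < Gamma (a/2 + 1/4) := Real.Gamma_pos_of_pos (by linarith)
  have harg : Real.sqrt 2 * Gamma (a/2 + 3/4) / (Real.sqrt a * Gamma (a/2 + 1/4)) /
      (Real.sqrt 2 * Gamma ((a+2)/2 + 3/4) / (Real.sqrt (a+2) * Gamma ((a+2)/2 + 1/4)))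
      = Real.sqrt (a+2) * (a/2+1/4) / (Real.sqrt a * (a/2+3/4)) := by
    rw [hG3, hG1]
    have s2 : (0:ℝ) < Real.sqrt 2 := by positivity
    have sa : (0:ℝ) < Real.sqrt a := Real.sqrt_pos.mpr ha
    have sa2 : (0:ℝ) < Real.sqrt (a+2) := Real.sqrt_pos.mpr ha2
    field_simp
  rw [harg]
  -- turn 2 * log w into log (w^2)
  have hw : (0:ℝ) < Real.sqrt (a+2) * (a/2+1/4) / (Real.sqrt a * (a/2+3/4)) := by
    have sa : (0:ℝ) < Real.sqrt a := Real.sqrt_pos.mpr ha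
    have sa2 : (0:ℝ) < Real.sqrt (a+2) := Real.sqrt_pos.mpr ha2
    positivity
  rw [show (2:ℝ) * log (Real.sqrt (a+2) * (a/2+1/4) / (Real.sqrt a * (a/2+3/4)))
      = log ((Real.sqrt (a+2) * (a/2+1/4) / (Real.sqrt a * (a/2+3/4)))^2) by
    rw [Real.log_pow]; push_cast; ring]
  have hsq : (Real.sqrt (a+2) * (a/2+1/4) / (Real.sqrt a * (a/2+3/4)))^2
      = (a+2) * (a/2+1/4)^2 / (a * (a/2+3/4)^2) := by
    have sa : (0:ℝ) < Real.sqrt a := Real.sqrt_pos.mpr ha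
    rw [div_pow, mul_pow, mul_pow, Real.sq_sqrt ha2.le, Real.sq_sqrt ha.le]
  rw [hsq]
  rw [← Real.log_div (by positivity) (by positivity), ← Real.log_mul (by positivity) (by positivity)]
  congr 1
  field_simp
  ring

lemma R_upper {b : ℝ} (hb : 0 < b) : RR b ≤ log (1 + 1/(2*b)) := by
  set u := b/2 + 1/4 with hu_def
  have hu : 0 < u := by simp only [hu_def]; linarith
  have h1 : Gamma (b/2 + 3/4) ≤ Gamma u * Real.sqrt u := by
    have := gamma_upper hu
    rwa [show u + 1/2 = b/2 + 3/4 by simp only [hu_def]; ring] at this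
  have hΓu : 0 < Gamma u := Real.Gamma_pos_of_pos hu
  have sb : 0 < Real.sqrt b := Real.sqrt_pos.mpr hb
  have hg : Real.sqrt 2 * Gamma (b/2 + 3/4) / (Real.sqrt b * Gamma (b/2 + 1/4))
      ≤ Real.sqrt 2 * Real.sqrt u / Real.sqrt b := by
    rw [show b/2 + 1/4 = u from rfl]
    rw [div_le_div_iff₀ (by positivity) (by positivity)]
    have s2 : (0:ℝ) < Real.sqrt 2 := by positivity
    have su : (0:ℝ) < Real.sqrt u := Real.sqrt_pos.mpr hu
    calc Real.sqrt 2 * Gamma (b/2+3/4) * Real.sqrt b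
        = Real.sqrt 2 * Real.sqrt b * Gamma (b/2+3/4) := by ring
      _ ≤ Real.sqrt 2 * Real.sqrt b * (Gamma u * Real.sqrt u) :=
          mul_le_mul_of_nonneg_left h1 (by positivity)
      _ = Real.sqrt 2 * Real.sqrt u * (Real.sqrt b * Gamma u) := by ring
  have hlog := Real.log_le_log (g_pos hb) hg
  have key : 2 * log (Real.sqrt 2 * Real.sqrt u / Real.sqrt b) = log (1 + 1/(2*b)) := by
    rw [show (2:ℝ) * log (Real.sqrt 2 * Real.sqrt u / Real.sqrt b)
        = log ((Real.sqrt 2 * Real.sqrt u / Real.sqrt b)^2) by rw [Real.log_pow]; push_cast; ring]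
    congr 1
    rw [div_pow, mul_pow, Real.sq_sqrt (by norm_num : (0:ℝ) ≤ 2), Real.sq_sqrt hu.le,
      Real.sq_sqrt hb.le]
    simp only [hu_def]
    field_simp
    ring
  calc RR b ≤ 2 * log (Real.sqrt 2 * Real.sqrt u / Real.sqrt b) := by
        rw [RR]; linarith
    _ = log (1 + 1/(2*b)) := key

lemma R_lower {b : ℝ} (hb : 0 < b) :
    log ((1 + 1/(2*b)) * ((b/2+1/4)/(b/2+3/4))) ≤ RR b := by
  set u := b/2 + 1/4 with hu_def
  have hu : 0 < u := by simp only [hu_def]; linarith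
  have hu2 : 0 < u + 1/2 := by linarith
  have h1 : u * Gamma u ≤ Gamma (b/2 + 3/4) * Real.sqrt (b/2 + 3/4) := by
    have := gamma_lower hu
    rwa [show u + 1/2 = b/2 + 3/4 by simp only [hu_def]; ring] at this
  have hΓu : 0 < Gamma u := Real.Gamma_pos_of_pos hu
  have hΓ3 : 0 < Gamma (b/2+3/4) := Real.Gamma_pos_of_pos (by linarith)
  have sb : 0 < Real.sqrt b := Real.sqrt_pos.mpr hb
  have s3 : 0 < Real.sqrt (b/2+3/4) := Real.sqrt_pos.mpr (by linarith)
  have s2 : (0:ℝ) < Real.sqrt 2 := by positivity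
  have hg : Real.sqrt 2 * u / (Real.sqrt b * Real.sqrt (b/2+3/4))
      ≤ Real.sqrt 2 * Gamma (b/2 + 3/4) / (Real.sqrt b * Gamma (b/2 + 1/4)) := by
    rw [show b/2 + 1/4 = u from rfl]
    rw [div_le_div_iff₀ (by positivity) (by positivity)]
    calc Real.sqrt 2 * u * (Real.sqrt b * Gamma u)
        = Real.sqrt 2 * Real.sqrt b * (u * Gamma u) := by ring
      _ ≤ Real.sqrt 2 * Real.sqrt b * (Gamma (b/2+3/4) * Real.sqrt (b/2+3/4)) :=
          mul_le_mul_of_nonneg_left h1 (by positivity)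
      _ = Real.sqrt 2 * Gamma (b/2+3/4) * (Real.sqrt b * Real.sqrt (b/2+3/4)) := by ring
  have hw : (0:ℝ) < Real.sqrt 2 * u / (Real.sqrt b * Real.sqrt (b/2+3/4)) := by positivity
  have hlog := Real.log_le_log hw hg
  have key : 2 * log (Real.sqrt 2 * u / (Real.sqrt b * Real.sqrt (b/2+3/4)))
      = log ((1 + 1/(2*b)) * ((b/2+1/4)/(b/2+3/4))) := by
    rw [show (2:ℝ) * log (Real.sqrt 2 * u / (Real.sqrt b * Real.sqrt (b/2+3/4)))
        = log ((Real.sqrt 2 * u / (Real.sqrt b * Real.sqrt (b/2+3/4)))^2) by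
      rw [Real.log_pow]; push_cast; ring]
    congr 1
    rw [div_pow, mul_pow, mul_pow, Real.sq_sqrt (by norm_num : (0:ℝ) ≤ 2),
      Real.sq_sqrt hb.le, Real.sq_sqrt (by linarith : (0:ℝ) ≤ b/2+3/4)]
    simp only [hu_def]
    field_simp
    ring
  calc log ((1 + 1/(2*b)) * ((b/2+1/4)/(b/2+3/4)))
      = 2 * log (Real.sqrt 2 * u / (Real.sqrt b * Real.sqrt (b/2+3/4))) := key.symm
    _ ≤ RR b := by rw [RR]; linarith

lemma seq_tendsto (a : ℝ) : Tendsto (fun N : ℕ => a + 2*(N:ℝ)) atTop atTop := by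
  apply tendsto_atTop_add_const_left
  exact (tendsto_natCast_atTop_atTop).const_mul_atTop two_pos

lemma I_tendsto {a : ℝ} (ha : 0 < a) :
    Tendsto (fun N : ℕ => ∫ t in Ioi (0:ℝ), ff (a + 2*(N:ℝ)) t) atTop (nhds 0) := by
  have hpos : ∀ N : ℕ, (0:ℝ) < a + 2*(N:ℝ) := fun N => by positivity
  have hup : Tendsto (fun N : ℕ => 1/(4*(a + 2*(N:ℝ))^2)) atTop (nhds 0) := by
    have h2 : Tendsto (fun N : ℕ => (a + 2*(N:ℝ))^2) atTop atTop :=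
      (tendsto_pow_atTop two_ne_zero).comp (seq_tendsto a)
    have h1 : Tendsto (fun N : ℕ => 4*(a + 2*(N:ℝ))^2) atTop atTop :=
      h2.const_mul_atTop (by norm_num : (0:ℝ) < 4)
    have h3 : Tendsto (fun N : ℕ => (4*(a + 2*(N:ℝ))^2)⁻¹) atTop (nhds 0) :=
      tendsto_inv_atTop_zero.comp h1
    exact h3.congr fun N => (one_div _).symm
  exact tendsto_of_tendsto_of_tendsto_of_le_of_le tendsto_const_nhds hup
    (fun N => I_nonneg (hpos N)) (fun N => I_le (hpos N))

lemma R_tendsto {a : ℝ} (ha : 0 < a) :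
    Tendsto (fun N : ℕ => RR (a + 2*(N:ℝ))) atTop (nhds 0) := by
  have hpos : ∀ N : ℕ, (0:ℝ) < a + 2*(N:ℝ) := fun N => by positivity
  have hb : Tendsto (fun N : ℕ => a + 2*(N:ℝ)) atTop atTop := seq_tendsto a
  have hinv : Tendsto (fun N : ℕ => 1/(2*(a + 2*(N:ℝ)))) atTop (nhds 0) := by
    have h1 : Tendsto (fun N : ℕ => 2*(a + 2*(N:ℝ))) atTop atTop :=
      hb.const_mul_atTop (by norm_num : (0:ℝ) < 2)
    exact (tendsto_inv_atTop_zero.comp h1).congr fun N => (one_div _).symm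
  have h1 : Tendsto (fun N : ℕ => 1 + 1/(2*(a + 2*(N:ℝ)))) atTop (nhds 1) := by
    have := (tendsto_const_nhds (x := (1:ℝ)) (f := (atTop : Filter ℕ))).add hinv
    rwa [add_zero] at this
  have hup : Tendsto (fun N : ℕ => log (1 + 1/(2*(a + 2*(N:ℝ))))) atTop (nhds 0) := by
    have := h1.log one_ne_zero
    rwa [Real.log_one] at this
  have hq : Tendsto (fun N : ℕ => ((a + 2*(N:ℝ))/2 + 1/4)/((a + 2*(N:ℝ))/2 + 3/4)) atTop
      (nhds 1) := by
    have hd : Tendsto (fun N : ℕ => (a + 2*(N:ℝ))/2 + 3/4) atTop atTop :=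
      tendsto_atTop_add_const_right _ _ (hb.atTop_div_const (by norm_num))
    have hi : Tendsto (fun N : ℕ => ((a + 2*(N:ℝ))/2 + 3/4)⁻¹) atTop (nhds 0) :=
      tendsto_inv_atTop_zero.comp hd
    have heq : ∀ N : ℕ, 1 - (1/2) * ((a + 2*(N:ℝ))/2 + 3/4)⁻¹
        = ((a + 2*(N:ℝ))/2 + 1/4)/((a + 2*(N:ℝ))/2 + 3/4) := by
      intro N
      have h0 : (0:ℝ) < (a + 2*(N:ℝ))/2 + 3/4 := by positivity
      field_simp
      ring
    have := (tendsto_const_nhds (x := (1:ℝ)) (f := (atTop : Filter ℕ))).sub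
      (hi.const_mul (1/2:ℝ))
    rw [mul_zero, sub_zero] at this
    exact this.congr heq
  have hlo : Tendsto (fun N : ℕ =>
      log ((1 + 1/(2*(a + 2*(N:ℝ)))) * (((a + 2*(N:ℝ))/2+1/4)/((a + 2*(N:ℝ))/2+3/4))))
      atTop (nhds 0) := by
    have := (h1.mul hq).log (by norm_num)
    rwa [show Real.log (1*1) = 0 by norm_num] at this
  exact tendsto_of_tendsto_of_tendsto_of_le_of_le hlo hup
    (fun N => R_lower (hpos N)) (fun N => R_upper (hpos N))
lemma main_eq {a : ℝ} (ha : 0 < a) : ∫ t in Ioi (0:ℝ), ff a t = RR a := by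
  have hD : ∀ N : ℕ, (∫ t in Ioi (0:ℝ), ff a t) - RR a
      = (∫ t in Ioi (0:ℝ), ff (a + 2*(N:ℝ)) t) - RR (a + 2*(N:ℝ)) := by
    intro N
    induction N with
    | zero => norm_num
    | succ n ih =>
      have hb : (0:ℝ) < a + 2*(n:ℝ) := by positivity
      have h1 := I_rec hb
      have h2 := R_rec hb
      have key : (∫ t in Ioi (0:ℝ), ff (a + 2*(n:ℝ)) t) - RR (a + 2*(n:ℝ))
          = (∫ t in Ioi (0:ℝ), ff (a + 2*(n:ℝ) + 2) t) - RR (a + 2*(n:ℝ) + 2) := by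
        linarith
      rw [ih, key]
      norm_num
      ring_nf
  have hlim : Tendsto (fun N : ℕ => (∫ t in Ioi (0:ℝ), ff (a + 2*(N:ℝ)) t) - RR (a + 2*(N:ℝ)))
      atTop (nhds 0) := by
    simpa using (I_tendsto ha).sub (R_tendsto ha)
  have hconst : Tendsto (fun _ : ℕ => (∫ t in Ioi (0:ℝ), ff a t) - RR a) atTop
      (nhds ((∫ t in Ioi (0:ℝ), ff a t) - RR a)) := tendsto_const_nhds
  have := tendsto_nhds_unique (hconst.congr hD) hlim
  linarith


theorem frullani_type_integral (a : ℝ) (ha : 0 < a) :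
    ∫ t in Set.Ioi (0 : ℝ),
        (Real.exp (-(a * t)) / t -
          2 * Real.exp (-((a + 1 / 2) * t)) / (t * (1 + Real.exp (-t)))) =
      2 * Real.log (Real.sqrt 2 * Real.Gamma (a / 2 + 3 / 4) /
        (Real.sqrt a * Real.Gamma (a / 2 + 1 / 4))) := by
  have h := main_eq ha
  simp only [ff, RR] at h
  exact h
end

section
/- The function Δ(a) = ∫₀^∞ ln(x² + a²)/cosh(πx) dx is continuous at a = 0, with Δ(0) = 2·∫₀^∞ ln(x)/cosh(πx) dx. -/
open Real MeasureTheory Set Filter Topology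

lemma negLog_integrable : IntegrableOn (fun x => -Real.log x) (Set.Ioc 0 1) := by
  have hcont : ContinuousOn (fun x : ℝ => x - x * Real.log x) (Set.Icc 0 1) :=
    (continuous_id.sub Real.continuous_mul_log).continuousOn
  have hderiv : ∀ x ∈ Set.Ioo (0:ℝ) 1,
      HasDerivAt (fun x => x - x * Real.log x) (-Real.log x) x := by
    intro x hx
    have h : HasDerivAt (fun x => x - x * Real.log x) (1 - (Real.log x + 1)) x :=
      (hasDerivAt_id x).sub (Real.hasDerivAt_mul_log hx.1.ne')
    convert h using 1
    ring
  have hpos : ∀ x ∈ Set.Ioo (0:ℝ) 1, 0 ≤ -Real.log x := by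
    intro x hx
    have := Real.log_nonpos hx.1.le hx.2.le
    linarith
  exact intervalIntegral.integrableOn_deriv_of_nonneg hcont hderiv hpos

lemma bound_integrable :
    IntegrableOn (fun x => (2 * |Real.log x| + x ^ 2) / Real.cosh (Real.pi * x))
      (Set.Ioi (0:ℝ)) := by
  have hmeas : Measurable fun x : ℝ => (2 * |Real.log x| + x ^ 2) / Real.cosh (Real.pi * x) := by
    exact ((Real.measurable_log.abs.const_mul 2).add (measurable_id.pow_const 2)).div
      (Real.continuous_cosh.measurable.comp (measurable_id.const_mul Real.pi))
  have h1 : IntegrableOn (fun x => (2 * |Real.log x| + x ^ 2) / Real.cosh (Real.pi * x))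
      (Set.Ioc (0:ℝ) 1) := by
    have hint : IntegrableOn (fun x => 2 * (-Real.log x) + 1) (Set.Ioc (0:ℝ) 1) :=
      (negLog_integrable.const_mul 2).add (integrableOn_const (by simp))
    refine Integrable.mono hint (hmeas.aestronglyMeasurable) ?_
    filter_upwards [ae_restrict_mem measurableSet_Ioc] with x hx
    have hx0 : 0 < x := hx.1
    have hc1 : 1 ≤ Real.cosh (Real.pi * x) :=
      Real.one_le_cosh _
    have hnum : 0 ≤ 2 * |Real.log x| + x ^ 2 := by positivity
    have hle : (2 * |Real.log x| + x ^ 2) / Real.cosh (Real.pi * x)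
        ≤ 2 * |Real.log x| + x ^ 2 := div_le_self hnum hc1
    have habs : |Real.log x| = -Real.log x :=
      abs_of_nonpos (Real.log_nonpos hx0.le hx.2)
    have hx2 : x ^ 2 ≤ 1 := by nlinarith [hx.2, hx0.le]
    have h2 : 2 * (-Real.log x) + 1 ≥ 0 := by
      have := Real.log_nonpos hx0.le hx.2; linarith
    rw [Real.norm_eq_abs, Real.norm_eq_abs,
      abs_of_nonneg (show (0:ℝ) ≤ (2 * |Real.log x| + x ^ 2) / Real.cosh (Real.pi * x)
        by positivity),
      abs_of_nonneg h2]
    calc (2 * |Real.log x| + x ^ 2) / Real.cosh (Real.pi * x)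
        ≤ 2 * |Real.log x| + x ^ 2 := hle
      _ ≤ 2 * (-Real.log x) + 1 := by rw [habs]; linarith
  have h2 : IntegrableOn (fun x => (2 * |Real.log x| + x ^ 2) / Real.cosh (Real.pi * x))
      (Set.Ioi (1:ℝ)) := by
    have hint0 : IntegrableOn (fun x : ℝ => x ^ (2:ℝ) * Real.exp (-Real.pi * x ^ (1:ℝ)))
        (Set.Ioi (0:ℝ)) :=
      integrableOn_rpow_mul_exp_neg_mul_rpow (by norm_num) one_pos Real.pi_pos
    have hint : IntegrableOn (fun x : ℝ => 6 * (x ^ 2 * Real.exp (-(Real.pi * x))))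
        (Set.Ioi (1:ℝ)) := by
      refine ((hint0.mono_set (Set.Ioi_subset_Ioi zero_le_one)).congr_fun ?_
        measurableSet_Ioi).const_mul 6
      intro x hx
      show x ^ (2:ℝ) * Real.exp (-Real.pi * x ^ (1:ℝ)) = x ^ 2 * Real.exp (-(Real.pi * x))
      rw [Real.rpow_one, Real.rpow_two, neg_mul]
    refine Integrable.mono hint (hmeas.aestronglyMeasurable) ?_
    filter_upwards [ae_restrict_mem measurableSet_Ioi] with x hx
    have hx1 : (1:ℝ) ≤ x := le_of_lt hx
    have hx0 : (0:ℝ) < x := lt_of_lt_of_le zero_lt_one hx1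
    have hcosh : Real.exp (Real.pi * x) / 2 ≤ Real.cosh (Real.pi * x) := by
      rw [Real.cosh_eq]
      have := Real.exp_pos (-(Real.pi * x))
      linarith
    have hcoshpos : 0 < Real.cosh (Real.pi * x) := Real.cosh_pos _
    have hlog : |Real.log x| ≤ x := by
      rw [abs_of_nonneg (Real.log_nonneg hx1)]
      linarith [Real.log_le_sub_one_of_pos hx0]
    have hxx : x ≤ x ^ 2 := by nlinarith
    have hnum : 2 * |Real.log x| + x ^ 2 ≤ 3 * x ^ 2 := by nlinarith
    have hnn : 0 ≤ 2 * |Real.log x| + x ^ 2 := by positivity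
    rw [Real.norm_eq_abs, Real.norm_eq_abs,
      abs_of_nonneg (show (0:ℝ) ≤ (2 * |Real.log x| + x ^ 2) / Real.cosh (Real.pi * x)
        by positivity),
      abs_of_nonneg (show (0:ℝ) ≤ 6 * (x ^ 2 * Real.exp (-(Real.pi * x))) by positivity)]
    calc (2 * |Real.log x| + x ^ 2) / Real.cosh (Real.pi * x)
        ≤ (3 * x ^ 2) / (Real.exp (Real.pi * x) / 2) :=
          div_le_div₀ (by positivity) hnum (by positivity) hcosh
      _ = 6 * (x ^ 2 * Real.exp (-(Real.pi * x))) := by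
          rw [Real.exp_neg]
          have := (Real.exp_pos (Real.pi * x)).ne'
          field_simp
          ring
  exact (h1.union h2).mono_set (by
    intro x hx
    rcases le_or_gt x 1 with h | h
    · exact Or.inl ⟨hx, h⟩
    · exact Or.inr h)

theorem delta_continuous_at_zero :
    ContinuousAt (fun a : ℝ => ∫ x in Set.Ioi (0 : ℝ),
        Real.log (x ^ 2 + a ^ 2) / Real.cosh (Real.pi * x)) 0 ∧
    (∫ x in Set.Ioi (0 : ℝ), Real.log (x ^ 2 + (0 : ℝ) ^ 2) / Real.cosh (Real.pi * x)) =
      2 * ∫ x in Set.Ioi (0 : ℝ), Real.log x / Real.cosh (Real.pi * x) := by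
  constructor
  · apply MeasureTheory.continuousAt_of_dominated
      (bound := fun x => (2 * |Real.log x| + x ^ 2) / Real.cosh (Real.pi * x))
    · filter_upwards with a
      apply Measurable.aestronglyMeasurable
      exact (Real.measurable_log.comp ((measurable_id.pow_const 2).add_const (a ^ 2))).div
        (Real.continuous_cosh.measurable.comp (measurable_id.const_mul Real.pi))
    · have hball : Metric.closedBall (0:ℝ) 1 ∈ 𝓝 (0:ℝ) :=
        Metric.closedBall_mem_nhds _ one_pos
      filter_upwards [hball] with a ha
      have ha1 : |a| ≤ 1 := by
        rwa [Metric.mem_closedBall, Real.dist_eq, sub_zero] at ha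
      have ha2 : a ^ 2 ≤ 1 := by
        rw [← sq_abs]; nlinarith [abs_nonneg a]
      filter_upwards [ae_restrict_mem measurableSet_Ioi] with x hx
      have hx0 : (0:ℝ) < x := hx
      have hcosh : 0 < Real.cosh (Real.pi * x) := Real.cosh_pos _
      rw [Real.norm_eq_abs, abs_div, abs_of_pos hcosh]
      apply div_le_div_of_nonneg_right ?_ hcosh.le |>.trans_eq rfl
      -- |log (x² + a²)| ≤ 2|log x| + x²
      have ht0 : 0 < x ^ 2 + a ^ 2 := by positivity
      rw [abs_le]
      constructor
      · have h1 : Real.log (x ^ 2) ≤ Real.log (x ^ 2 + a ^ 2) :=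
          Real.log_le_log (by positivity) (by nlinarith [sq_nonneg a])
        have h2 : Real.log (x ^ 2) = 2 * Real.log x := by
          rw [Real.log_pow]; norm_num
        have h3 : -|Real.log x| ≤ Real.log x := neg_abs_le _
        nlinarith [sq_nonneg x]
      · have h1 : Real.log (x ^ 2 + a ^ 2) ≤ Real.log (x ^ 2 + 1) :=
          Real.log_le_log ht0 (by linarith)
        have h2 : Real.log (x ^ 2 + 1) ≤ x ^ 2 := by
          have := Real.log_le_sub_one_of_pos (show (0:ℝ) < x ^ 2 + 1 by positivity)
          linarith
        have h3 : 0 ≤ |Real.log x| := abs_nonneg _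
        linarith
    · exact bound_integrable
    · filter_upwards [ae_restrict_mem measurableSet_Ioi] with x hx
      have hx0 : (0:ℝ) < x := hx
      apply ContinuousAt.div_const
      exact ContinuousAt.log (continuousAt_const.add ((continuous_pow 2).continuousAt))
        (by positivity)
  · rw [show (2 : ℝ) * ∫ x in Set.Ioi (0 : ℝ), Real.log x / Real.cosh (Real.pi * x)
        = ∫ x in Set.Ioi (0 : ℝ), 2 * (Real.log x / Real.cosh (Real.pi * x)) from
      (MeasureTheory.integral_const_mul 2 _).symm]
    apply MeasureTheory.setIntegral_congr_fun measurableSet_Ioi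
    intro x hx
    have hx0 : (0:ℝ) < x := hx
    show Real.log (x ^ 2 + (0:ℝ) ^ 2) / Real.cosh (Real.pi * x)
        = 2 * (Real.log x / Real.cosh (Real.pi * x))
    rw [show x ^ 2 + (0:ℝ) ^ 2 = x ^ 2 by ring, Real.log_pow]
    push_cast
    ring
end
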